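/- If D and H are Bott equivalent acyclic digraphs, then |L_k(D)| = |L_k(H)| for every nonnegative integer k; in particular, Bott equivalent acyclic digraphs have the identical type (|L₀|, |L₁|, |L₂|, …). -/

import Mathlib

/-- Local complementation at `v`: arc set `A(D) Δ (N⁻_D(v) × N⁺_D(v))`. -/
def localComp {V : Type*} (R : V → V → Prop) (v : V) : V → V → Prop :=
  fun x y => Xor' (R x y) (R x v ∧ R v y)

/-- The slide on `uv`: arc set `A(D) Δ {(v,w) : w ∈ N⁺_D(u)}`. -/
def slideRel {V : Type*} (R : V → V → Prop) (u v : V) : V → V → Prop :=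
  fun x y => Xor' (R x y) (x = v ∧ R u y)

/-- A digraph is acyclic if it has no directed cycle. -/
def AcyclicRel {V : Type*} (R : V → V → Prop) : Prop :=
  ∀ v : V, ¬ Relation.TransGen R v v

/-- One graph operation: a local complementation or a legal slide. -/
inductive GStep {V : Type*} : (V → V → Prop) → (V → V → Prop) → Prop
  | lc (R : V → V → Prop) (v : V) : GStep R (localComp R v)
  | sl (R : V → V → Prop) (u v : V) (h : u ≠ v) (hN : ∀ w, R w u ↔ R w v) :
      GStep R (slideRel R u v)

/-- Bott equivalence of digraphs. -/
def BottEquivD {V : Type*} {W : Type*} (R : V → V → Prop) (S : W → W → Prop) : Prop :=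
  ∃ R' : V → V → Prop, Relation.ReflTransGen GStep R R' ∧
    ∃ e : V ≃ W, ∀ a b : V, R' a b ↔ S (e a) (e b)

/-- There is a directed path with exactly `k` arcs ending at `v`. -/
def EndPath {V : Type*} (R : V → V → Prop) (k : ℕ) (v : V) : Prop :=
  ∃ f : Fin (k + 1) → V, Function.Injective f ∧ f (Fin.last k) = v ∧
    ∀ i : Fin k, R (f i.castSucc) (f i.succ)

/-- The `k`-th level set `L_k(D)`: vertices `v` such that a longest directed
path ending at `v` has exactly `k` arcs. -/
def levelSet {V : Type*} (R : V → V → Prop) (k : ℕ) : Set V :=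
  {v | EndPath R k v ∧ ∀ m : ℕ, k < m → ¬ EndPath R m v}

namespace LevelInv

variable {V : Type*}

inductive WalkLen (R : V → V → Prop) : ℕ → V → Prop
  | nil (v : V) : WalkLen R 0 v
  | cons {k : ℕ} {x v : V} : WalkLen R k x → R x v → WalkLen R (k+1) v

lemma walkLen_congr {R R' : V → V → Prop} (h : ∀ x y, R x y ↔ R' x y) :
    ∀ {k v}, WalkLen R k v → WalkLen R' k v := by
  intro k v hw
  induction hw with
  | nil v => exact .nil v
  | cons hw hr ih => exact .cons ih ((h _ _).mp hr)

lemma walk_of_fn (R : V → V → Prop) :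
    ∀ (k : ℕ) (f : Fin (k+1) → V), (∀ i : Fin k, R (f i.castSucc) (f i.succ)) →
      WalkLen R k (f (Fin.last k))
  | 0, f, _ => .nil _
  | k+1, f, h => by
      have ih := walk_of_fn R k (f ∘ Fin.castSucc) (fun i => by
        have := h i.castSucc
        rw [Fin.succ_castSucc] at this
        exact this)
      have hlast : R (f (Fin.last k).castSucc) (f (Fin.last (k+1))) := by
        have := h (Fin.last k)
        simpa [Fin.succ_last] using this
      exact .cons ih hlast

lemma fn_of_walk {R : V → V → Prop} : ∀ {k v}, WalkLen R k v →
    ∃ f : Fin (k+1) → V, f (Fin.last k) = v ∧ ∀ i : Fin k, R (f i.castSucc) (f i.succ) := by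
  intro k v hw
  induction hw with
  | nil v => exact ⟨fun _ => v, rfl, fun i => i.elim0⟩
  | @cons k x v hw hr ih =>
    obtain ⟨f, hlast, harc⟩ := ih
    refine ⟨Fin.snoc f v, Fin.snoc_last _ _, fun i => ?_⟩
    induction i using Fin.lastCases with
    | last => simpa [Fin.succ_last, hlast] using hr
    | cast j => simpa only [Fin.succ_castSucc, Fin.snoc_castSucc] using harc j

lemma chain_aux {R : V → V → Prop} {k : ℕ} {f : Fin (k+1) → V}
    (harc : ∀ i : Fin k, R (f i.castSucc) (f i.succ)) :
    ∀ (j : ℕ) (hj : j < k + 1) (i : ℕ) (hi : i < j),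
      Relation.TransGen R (f ⟨i, lt_trans hi hj⟩) (f ⟨j, hj⟩) := by
  intro j
  induction j with
  | zero => intro _ i hi; exact absurd hi (Nat.not_lt_zero i)
  | succ j ih =>
    intro hj i hi
    have hjk : j < k := Nat.lt_of_succ_lt_succ hj
    have hstep : R (f ⟨j, by omega⟩) (f ⟨j+1, hj⟩) := harc ⟨j, hjk⟩
    rcases Nat.lt_or_ge i j with h | h
    · exact (ih (by omega) i h).tail hstep
    · have : i = j := le_antisymm (Nat.le_of_lt_succ hi) h
      subst this
      exact .single hstep

lemma endPath_iff_walk {R : V → V → Prop} (hR : AcyclicRel R) (k : ℕ) (v : V) :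
    EndPath R k v ↔ WalkLen R k v := by
  constructor
  · rintro ⟨f, -, hlast, harc⟩
    have := walk_of_fn R k f harc
    rwa [hlast] at this
  · intro hw
    obtain ⟨f, hlast, harc⟩ := fn_of_walk hw
    refine ⟨f, ?_, hlast, harc⟩
    intro i j hij
    by_contra hne
    rcases lt_or_gt_of_ne hne with h | h
    · have := chain_aux harc j.val j.isLt i.val h
      rw [Fin.eta, Fin.eta, hij] at this
      exact hR _ this
    · have := chain_aux harc i.val i.isLt j.val h
      rw [Fin.eta, Fin.eta, hij] at this
      exact hR _ this

lemma gstep_walk {R R' : V → V → Prop} (hstep : GStep R R') :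
    ∀ {k w}, WalkLen R' k w → ∃ m, k ≤ m ∧ WalkLen R m w := by
  cases hstep with
  | lc v =>
    intro k w hw
    induction hw with
    | nil w => exact ⟨0, le_refl 0, .nil w⟩
    | @cons k x w hw hr ih =>
      obtain ⟨m, hm, hwalk⟩ := ih
      rcases hr with ⟨h1, -⟩ | ⟨⟨h1, h2⟩, -⟩
      · exact ⟨m+1, by omega, .cons hwalk h1⟩
      · exact ⟨m+2, by omega, .cons (.cons hwalk h1) h2⟩
  | sl u v huv hN =>
    intro k w hw
    induction hw with
    | nil w => exact ⟨0, le_refl 0, .nil w⟩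
    | @cons k x w hw hr ih =>
      obtain ⟨m, hm, hwalk⟩ := ih
      rcases hr with ⟨h1, -⟩ | ⟨⟨rfl, h2⟩, -⟩
      · exact ⟨m+1, by omega, .cons hwalk h1⟩
      · cases hwalk with
        | nil => exact ⟨1, by omega, .cons (.nil u) h2⟩
        | @cons m' y _ hw' hr' =>
          exact ⟨m'+2, by omega, .cons (.cons hw' ((hN y).mpr hr')) h2⟩

lemma transGen_of_arc {r s : V → V → Prop} (h : ∀ a b, r a b → Relation.TransGen s a b) :
    ∀ {a b}, Relation.TransGen r a b → Relation.TransGen s a b := by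
  intro a b hab
  induction hab with
  | single h' => exact h _ _ h'
  | tail _ h' ih => exact ih.trans (h _ _ h')

lemma gstep_acyclic {R R' : V → V → Prop} (hR : AcyclicRel R) (hstep : GStep R R') :
    AcyclicRel R' := by
  cases hstep with
  | lc v =>
    intro c hc
    refine hR c (transGen_of_arc (fun a b hab => ?_) hc)
    rcases hab with ⟨h1, -⟩ | ⟨⟨h1, h2⟩, -⟩
    · exact .single h1
    · exact (Relation.TransGen.single h1).tail h2
  | sl u v huv hN =>
    have key : ∀ {x y}, Relation.TransGen (slideRel R u v) x y →
        Relation.TransGen R x y ∨ (x = v ∧ (Relation.TransGen R u y ∨ u = y)) := by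
      intro x y hxy
      induction hxy with
      | single h' =>
        rcases h' with ⟨h1, -⟩ | ⟨⟨rfl, h2⟩, -⟩
        · exact Or.inl (.single h1)
        · exact Or.inr ⟨rfl, Or.inl (.single h2)⟩
      | @tail b c hxb hbc ih =>
        rcases hbc with ⟨h1, -⟩ | ⟨⟨rfl, h2⟩, -⟩
        · rcases ih with h | ⟨rfl, h | rfl⟩
          · exact Or.inl (h.tail h1)
          · exact Or.inr ⟨rfl, Or.inl (h.tail h1)⟩
          · exact Or.inr ⟨rfl, Or.inl (.single h1)⟩
        · rcases ih with h | ⟨rfl, h | rfl⟩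
          · obtain ⟨w, hxw, hwv⟩ := Relation.TransGen.tail'_iff.mp h
            exact Or.inl ((Relation.TransGen.tail' hxw ((hN w).mpr hwv)).tail h2)
          · obtain ⟨w, huw, hwv⟩ := Relation.TransGen.tail'_iff.mp h
            exact ((hR u) (Relation.TransGen.tail' huw ((hN w).mpr hwv))).elim
          · exact (huv rfl).elim
    intro c hc
    rcases key hc with h | ⟨rfl, h | rfl⟩
    · exact hR c h
    · obtain ⟨w, huw, hwv⟩ := Relation.TransGen.tail'_iff.mp h
      exact hR u (Relation.TransGen.tail' huw ((hN w).mpr hwv))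
    · exact huv rfl

lemma gstep_symm {R R' : V → V → Prop} (hR : AcyclicRel R) (hstep : GStep R R') :
    ∃ R'' : V → V → Prop, GStep R' R'' ∧ ∀ x y, R'' x y ↔ R x y := by
  have noloop : ∀ x, ¬ R x x := fun x hx => hR x (.single hx)
  cases hstep with
  | lc v =>
    refine ⟨localComp (localComp R v) v, .lc _ v, fun x y => ?_⟩
    have hvv := noloop v
    simp only [localComp, Xor', Xor]
    tauto
  | sl u v huv hN =>
    have huv' : ¬ R u v := fun h => (noloop u) ((hN u).mpr h)
    have hN' : ∀ w, slideRel R u v w u ↔ slideRel R u v w v := by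
      intro w
      have := hN w
      have := noloop u
      simp only [slideRel, Xor', Xor]
      constructor <;> intro h <;> tauto
    refine ⟨slideRel (slideRel R u v) u v, .sl _ u v huv hN', fun x y => ?_⟩
    simp only [slideRel, Xor', Xor]
    have : u ≠ v := huv
    tauto

lemma gstep_levelSet {R R' : V → V → Prop} (hR : AcyclicRel R) (hstep : GStep R R') :
    AcyclicRel R' ∧ ∀ k, levelSet R k = levelSet R' k := by
  have hR' := gstep_acyclic hR hstep
  obtain ⟨R'', hstep'', hiff⟩ := gstep_symm hR hstep
  have fwd : ∀ {k w}, WalkLen R' k w → ∃ m, k ≤ m ∧ WalkLen R m w := gstep_walk hstep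
  have bwd : ∀ {k w}, WalkLen R k w → ∃ m, k ≤ m ∧ WalkLen R' m w := by
    intro k w hw
    exact gstep_walk hstep'' (walkLen_congr (fun x y => (hiff x y).symm) hw)
  refine ⟨hR', fun k => ?_⟩
  ext v
  simp only [levelSet, Set.mem_setOf_eq, endPath_iff_walk hR, endPath_iff_walk hR']
  constructor
  · rintro ⟨hk, hmax⟩
    obtain ⟨m, hkm, hm⟩ := bwd hk
    have hmax' : ∀ m', k < m' → ¬ WalkLen R' m' v := by
      intro m' hlt hw'
      obtain ⟨m'', h1, h2⟩ := fwd hw'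
      exact hmax m'' (lt_of_lt_of_le hlt h1) h2
    have hmk : m = k := by
      by_contra hne
      exact hmax' m (lt_of_le_of_ne hkm (Ne.symm hne)) hm
    exact ⟨hmk ▸ hm, hmax'⟩
  · rintro ⟨hk, hmax⟩
    obtain ⟨m, hkm, hm⟩ := fwd hk
    have hmax' : ∀ m', k < m' → ¬ WalkLen R m' v := by
      intro m' hlt hw'
      obtain ⟨m'', h1, h2⟩ := bwd hw'
      exact hmax m'' (lt_of_lt_of_le hlt h1) h2
    have hmk : m = k := by
      by_contra hne
      exact hmax' m (lt_of_le_of_ne hkm (Ne.symm hne)) hm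
    exact ⟨hmk ▸ hm, hmax'⟩


lemma endPath_equiv {W : Type*} {R' : V → V → Prop} {S : W → W → Prop} (e : V ≃ W)
    (he : ∀ a b : V, R' a b ↔ S (e a) (e b)) (k : ℕ) (v : V) :
    EndPath R' k v ↔ EndPath S k (e v) := by
  constructor
  · rintro ⟨f, hinj, hlast, harc⟩
    exact ⟨e ∘ f, e.injective.comp hinj, by simp [hlast], fun i => (he _ _).mp (harc i)⟩
  · rintro ⟨f, hinj, hlast, harc⟩
    refine ⟨e.symm ∘ f, e.symm.injective.comp hinj, by simp [hlast], fun i => ?_⟩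
    rw [he]
    simpa using harc i

end LevelInv

/-- Bott equivalent acyclic digraphs have the same level set sizes, hence the
identical type `(|L₀|, |L₁|, |L₂|, …)`. -/
theorem levelSet_card_invariant {V W : Type*} [Fintype V] [Fintype W]
    (R : V → V → Prop) (S : W → W → Prop)
    (hR : AcyclicRel R) (hS : AcyclicRel S) (h : BottEquivD R S) :
    ∀ k : ℕ, Nat.card ↥(levelSet R k) = Nat.card ↥(levelSet S k) := by
  obtain ⟨R', hchain, e, he⟩ := h
  have hmain : AcyclicRel R' ∧ ∀ k, levelSet R k = levelSet R' k := by
    clear hS he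
    induction hchain with
    | refl => exact ⟨hR, fun _ => rfl⟩
    | tail hchain hstep ih =>
      obtain ⟨hac, hls⟩ := ih
      obtain ⟨hac', hls'⟩ := LevelInv.gstep_levelSet hac hstep
      exact ⟨hac', fun k => (hls k).trans (hls' k)⟩
  obtain ⟨hR', hls⟩ := hmain
  intro k
  rw [hls k]
  refine Nat.card_congr (e.subtypeEquiv fun v => ?_)
  simp only [levelSet, Set.mem_setOf_eq, LevelInv.endPath_equiv e he]
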